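/- For every n >= 3, the bipyramid over an n-gon (the polyhedron with 2 apexes, n equatorial vertices, 3n edges, and 2n triangular faces) admits a coherent labelling: an injective assignment of real numbers to its 3n edges such that each of the 2n oriented triangular faces has a cyclic rotation of its three edge labels that is strictly increasing. -/
import Mathlib


/-- A cyclic triple of reals admits a coherent (strictly) increasing rotation. -/
def Coh3 (a b c : ℝ) : Prop :=
  (a < b ∧ b < c) ∨ (b < c ∧ c < a) ∨ (c < a ∧ a < b)

/-- Every bipyramid over an `n`-gon (`n ≥ 3`) admits a coherent labelling: with `e` the
equatorial edge labels, `t` the top edge labels and `b` the bottom edge labels (all `3n`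
distinct), every top face `(t i, e i, t (i+1))` and every bottom face
`(b (i+1), e i, b i)` is coherent. -/
theorem bipyramid_coherent_labelling (n : ℕ) (hn : 3 ≤ n) :
    ∃ e t b : Fin n → ℝ,
      Function.Injective (Sum.elim e (Sum.elim t b)) ∧
      (∀ i : Fin n, Coh3 (t i) (e i) (t (finRotate n i))) ∧
      (∀ i : Fin n, Coh3 (b (finRotate n i)) (e i) (b i)) := by
  obtain ⟨m, rfl⟩ : ∃ m, n = m + 1 := ⟨n - 1, by omega⟩
  have hm : 2 ≤ m := by omega
  refine ⟨fun i => (i : ℝ) + 1/2, fun i => (i : ℝ), fun i => (i : ℝ) + 3/4, ?_, ?_, ?_⟩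
  · intro x y h
    rcases x with i | i | i <;> rcases y with j | j | j <;>
      simp only [Sum.elim_inl, Sum.elim_inr] at h ⊢
    · have : (i : ℝ) = (j : ℝ) := by linarith
      have : (i : ℕ) = (j : ℕ) := by exact_mod_cast this
      exact congrArg Sum.inl (Fin.ext this)
    · exfalso
      have h2 : ((2 * i.val + 1 : ℕ) : ℝ) = ((2 * j.val : ℕ) : ℝ) := by push_cast; linarith
      have := Nat.cast_injective h2
      omega
    · exfalso
      have h2 : ((4 * i.val + 2 : ℕ) : ℝ) = ((4 * j.val + 3 : ℕ) : ℝ) := by push_cast; linarith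
      have := Nat.cast_injective h2
      omega
    · exfalso
      have h2 : ((2 * j.val + 1 : ℕ) : ℝ) = ((2 * i.val : ℕ) : ℝ) := by push_cast; linarith
      have := Nat.cast_injective h2
      omega
    · have : (i : ℕ) = (j : ℕ) := by exact_mod_cast h
      exact congrArg (Sum.inr ∘ Sum.inl) (Fin.ext this)
    · exfalso
      have h2 : ((4 * i.val : ℕ) : ℝ) = ((4 * j.val + 3 : ℕ) : ℝ) := by push_cast; linarith
      have := Nat.cast_injective h2
      omega
    · exfalso
      have h2 : ((4 * j.val + 2 : ℕ) : ℝ) = ((4 * i.val + 3 : ℕ) : ℝ) := by push_cast; linarith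
      have := Nat.cast_injective h2
      omega
    · exfalso
      have h2 : ((4 * j.val : ℕ) : ℝ) = ((4 * i.val + 3 : ℕ) : ℝ) := by push_cast; linarith
      have := Nat.cast_injective h2
      omega
    · have : (i : ℝ) = (j : ℝ) := by linarith
      have : (i : ℕ) = (j : ℕ) := by exact_mod_cast this
      exact congrArg (Sum.inr ∘ Sum.inr) (Fin.ext this)
  · intro i
    rw [finRotate_succ_apply]; dsimp only
    by_cases hi : i = Fin.last m
    · subst hi
      have : ((Fin.last m + 1 : Fin (m + 1)) : ℝ) = 0 := by
        norm_cast
        simp [Fin.last, Fin.add_def]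
      rw [this]
      refine Or.inr (Or.inr ⟨?_, ?_⟩)
      · have : (0 : ℝ) < m := by exact_mod_cast (by omega : 0 < m)
        simpa [Fin.last] using this
      · simp [Fin.last]
    · have hv : ((i + 1 : Fin (m + 1)) : ℝ) = (i : ℝ) + 1 := by
        have := Fin.val_add_one_of_lt (Fin.lt_last_iff_ne_last.mpr hi)
        rw [this]; push_cast; ring
      rw [hv]
      exact Or.inl ⟨by linarith, by linarith⟩
  · intro i
    rw [finRotate_succ_apply]; dsimp only
    by_cases hi : i = Fin.last m
    · subst hi
      have : ((Fin.last m + 1 : Fin (m + 1)) : ℝ) = 0 := by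
        norm_cast
        simp [Fin.last, Fin.add_def]
      rw [this]
      have hm' : (2 : ℝ) ≤ m := by exact_mod_cast hm
      refine Or.inl ⟨?_, ?_⟩ <;> simp [Fin.last] <;> linarith
    · have hv : ((i + 1 : Fin (m + 1)) : ℝ) = (i : ℝ) + 1 := by
        have := Fin.val_add_one_of_lt (Fin.lt_last_iff_ne_last.mpr hi)
        rw [this]; push_cast; ring
      rw [hv]
      exact Or.inr (Or.inl ⟨by linarith, by linarith⟩)
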